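/- (Truth lemma for the canonical model.) Fix a second-level sequent Ψ ⇛ Φ. Let W₀ be the set of saturated first-level sequents Γ ⇒ Δ with Γ ∪ Δ ⊆ SF(Ψ,Φ) that are not cut-free provable in GLS_seq, let (Γ⇒Δ) R₀ (Γ'⇒Δ') iff Γ_□ ⊊ Γ'_□ and Γ_□ ⊆ Γ' (where Θ_□ = {φ : □φ ∈ Θ}), and let V₀((Γ⇒Δ), p) = true iff p ∈ Γ for propositional variables p. Then ⟨W₀, R₀, V₀⟩ is a GL-model, and for every formula φ and every world (Γ⇒Δ) ∈ W₀: if φ ∈ Γ then V₀((Γ⇒Δ), φ) = true, and if φ ∈ Δ then V₀((Γ⇒Δ), φ) = false. -/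

import Mathlib

/-- Modal formulas: propositional variables, ⊥, →, □. -/
inductive Formula : Type
  | var : ℕ → Formula
  | bot : Formula
  | imp : Formula → Formula → Formula
  | box : Formula → Formula
deriving DecidableEq

/-- Levels of sequents in GLS_seq: first level (⇒) and second level (⇛). -/
inductive SeqLevel : Type
  | one
  | two
deriving DecidableEq

/-- The set of subformulas of a formula. -/
def Formula.subf : Formula → Finset Formula
  | .var p => {.var p}
  | .bot => {.bot}
  | .imp φ ψ => insert (.imp φ ψ) (φ.subf ∪ ψ.subf)
  | .box φ => insert (.box φ) φ.subf

/-- SF(Ψ,Φ): all subformulas of formulas in Ψ ∪ Φ. -/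
def SF (Ψ Φ : Finset Formula) : Finset Formula := (Ψ ∪ Φ).biUnion Formula.subf

def Formula.isBox : Formula → Bool
  | .box _ => true
  | _ => false

def Formula.unbox : Formula → Formula
  | .box φ => φ
  | φ => φ

/-- Θ_□ = {φ : □φ ∈ Θ}. -/
def boxInv (Θ : Finset Formula) : Finset Formula :=
  (Θ.filter fun ψ => ψ.isBox).image Formula.unbox

/-- The sequent calculus GLS_seq, on sequents of two levels.  The Bool parameter
records whether the cut rule may be used: `GLSSeq true` is provability in GLS_seq,
`GLSSeq false` is cut-free provability.  The first-level fragment is exactly GL_seq. -/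
inductive GLSSeq : Bool → SeqLevel → Finset Formula → Finset Formula → Prop
  | init (c lv φ) : GLSSeq c lv {φ} {φ}
  | initBot (c lv) : GLSSeq c lv {Formula.bot} ∅
  | cut {lv Γ Δ} (φ) : GLSSeq true lv Γ (insert φ Δ) → GLSSeq true lv (insert φ Γ) Δ →
      GLSSeq true lv Γ Δ
  | weak {c lv Γ Δ Γ' Δ'} : Γ ⊆ Γ' → Δ ⊆ Δ' → GLSSeq c lv Γ Δ → GLSSeq c lv Γ' Δ'
  | impL {c lv Γ Δ φ ψ} : GLSSeq c lv Γ (insert φ Δ) → GLSSeq c lv (insert ψ Γ) Δ →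
      GLSSeq c lv (insert (.imp φ ψ) Γ) Δ
  | impR {c lv Γ Δ φ ψ} : GLSSeq c lv (insert φ Γ) (insert ψ Δ) →
      GLSSeq c lv Γ (insert (.imp φ ψ) Δ)
  | boxGL {c Γ φ} : GLSSeq c .one (Γ ∪ Γ.image .box ∪ {.box φ}) {φ} →
      GLSSeq c .one (Γ.image .box) {.box φ}
  | boxL {c Γ Δ} (φ) : GLSSeq c .two (insert φ Γ) Δ → GLSSeq c .two (insert (.box φ) Γ) Δ
  | lift {c Γ Δ} : GLSSeq c .one Γ Δ → GLSSeq c .two Γ Δ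

/-- The sequent calculus GL_seq (on first-level sequents only). -/
inductive GLSeq : Bool → Finset Formula → Finset Formula → Prop
  | init (c φ) : GLSeq c {φ} {φ}
  | initBot (c) : GLSeq c {Formula.bot} ∅
  | cut {Γ Δ} (φ) : GLSeq true Γ (insert φ Δ) → GLSeq true (insert φ Γ) Δ → GLSeq true Γ Δ
  | weak {c Γ Δ Γ' Δ'} : Γ ⊆ Γ' → Δ ⊆ Δ' → GLSeq c Γ Δ → GLSeq c Γ' Δ'
  | impL {c Γ Δ φ ψ} : GLSeq c Γ (insert φ Δ) → GLSeq c (insert ψ Γ) Δ →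
      GLSeq c (insert (.imp φ ψ) Γ) Δ
  | impR {c Γ Δ φ ψ} : GLSeq c (insert φ Γ) (insert ψ Δ) → GLSeq c Γ (insert (.imp φ ψ) Δ)
  | boxGL {c Γ φ} : GLSeq c (Γ ∪ Γ.image .box ∪ {.box φ}) {φ} → GLSeq c (Γ.image .box) {.box φ}

/-- Proof trees of GLS_seq (cut included). -/
inductive GLSTree : SeqLevel → Finset Formula → Finset Formula → Type
  | init (lv φ) : GLSTree lv {φ} {φ}
  | initBot (lv) : GLSTree lv {Formula.bot} ∅
  | cut {lv Γ Δ} (φ) : GLSTree lv Γ (insert φ Δ) → GLSTree lv (insert φ Γ) Δ → GLSTree lv Γ Δ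
  | weak {lv Γ Δ} (Γ' Δ' : Finset Formula) : Γ ⊆ Γ' → Δ ⊆ Δ' → GLSTree lv Γ Δ → GLSTree lv Γ' Δ'
  | impL {lv Γ Δ} (φ ψ) : GLSTree lv Γ (insert φ Δ) → GLSTree lv (insert ψ Γ) Δ →
      GLSTree lv (insert (.imp φ ψ) Γ) Δ
  | impR {lv Γ Δ} (φ ψ) : GLSTree lv (insert φ Γ) (insert ψ Δ) → GLSTree lv Γ (insert (.imp φ ψ) Δ)
  | boxGL (Γ φ) : GLSTree .one (Γ ∪ Γ.image .box ∪ {.box φ}) {φ} → GLSTree .one (Γ.image .box) {.box φ}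
  | boxL {Γ Δ} (φ) : GLSTree .two (insert φ Γ) Δ → GLSTree .two (insert (.box φ) Γ) Δ
  | lift {Γ Δ} : GLSTree .one Γ Δ → GLSTree .two Γ Δ

/-- The set of principal formulas of all (□L) rules occurring in a proof tree. -/
def GLSTree.principals : ∀ {lv Γ Δ}, GLSTree lv Γ Δ → Finset Formula
  | _, _, _, .init _ _ => ∅
  | _, _, _, .initBot _ => ∅
  | _, _, _, .cut _ t₁ t₂ => t₁.principals ∪ t₂.principals
  | _, _, _, .weak _ _ _ _ t => t.principals
  | _, _, _, .impL _ _ t₁ t₂ => t₁.principals ∪ t₂.principals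
  | _, _, _, .impR _ _ t => t.principals
  | _, _, _, .boxGL _ _ t => t.principals
  | _, _, _, .boxL φ t => insert (Formula.box φ) t.principals
  | _, _, _, .lift t => t.principals

/-- A proof tree bundled with its level and conclusion. -/
abbrev PGLSTree : Type :=
  (lv : SeqLevel) × (Γ : Finset Formula) × (Δ : Finset Formula) × GLSTree lv Γ Δ

/-- The set of subproofs of a proof tree (including the tree itself). -/
def GLSTree.subproofs {lv Γ Δ} (t : GLSTree lv Γ Δ) : Set PGLSTree :=
  insert ⟨lv, Γ, Δ, t⟩ <|
    match lv, Γ, Δ, t with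
    | _, _, _, .init _ _ => ∅
    | _, _, _, .initBot _ => ∅
    | _, _, _, .cut _ t₁ t₂ => t₁.subproofs ∪ t₂.subproofs
    | _, _, _, .weak _ _ _ _ t₁ => t₁.subproofs
    | _, _, _, .impL _ _ t₁ t₂ => t₁.subproofs ∪ t₂.subproofs
    | _, _, _, .impR _ _ t₁ => t₁.subproofs
    | _, _, _, .boxGL _ _ t₁ => t₁.subproofs
    | _, _, _, .boxL _ t₁ => t₁.subproofs
    | _, _, _, .lift t₁ => t₁.subproofs

/-- Kripke satisfaction over a frame `R` with atomic valuation `v`. -/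
def KSat {W : Type} (R : W → W → Prop) (v : W → ℕ → Prop) : Formula → W → Prop
  | .var p, w => v w p
  | .bot, _ => False
  | .imp φ ψ, w => KSat R v φ w → KSat R v ψ w
  | .box φ, w => ∀ w', R w w' → KSat R v φ w'

/-- A GL-model: a nonempty, transitive, converse well-founded Kripke model. -/
structure GLModel where
  World : Type
  ne : Nonempty World
  R : World → World → Prop
  trans : Transitive R
  cwf : ∀ f : ℕ → World, ¬ ∀ i, R (f i) (f (i + 1))
  val : World → ℕ → Prop

/-- Truth of a formula at a world of a GL-model. -/
def GLModel.sat (M : GLModel) (w : M.World) (φ : Formula) : Prop := KSat M.R M.val φ w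

/-- Truth of a sequent Γ ▸ Δ at a world: some γ ∈ Γ is false or some δ ∈ Δ is true. -/
def GLModel.seqTrue (M : GLModel) (w : M.World) (Γ Δ : Finset Formula) : Prop :=
  (∃ γ ∈ Γ, ¬ M.sat w γ) ∨ (∃ δ ∈ Δ, M.sat w δ)

/-- w is Sg-reflexive: □α → α is true at w for every □α ∈ Sg. -/
def GLModel.reflexiveFor (M : GLModel) (w : M.World) (S : Finset Formula) : Prop :=
  ∀ α : Formula, Formula.box α ∈ S → M.sat w ((Formula.box α).imp α)

/-- Saturation conditions (→L), (→R) for first-level sequents. -/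
def Saturated1 (Γ Δ : Finset Formula) : Prop :=
  (∀ φ ψ : Formula, φ.imp ψ ∈ Γ → φ ∈ Δ ∨ ψ ∈ Γ) ∧
  (∀ φ ψ : Formula, φ.imp ψ ∈ Δ → φ ∈ Γ ∧ ψ ∈ Δ)

/-- Saturation for second-level sequents: additionally (□L). -/
def Saturated2 (Γ Δ : Finset Formula) : Prop :=
  Saturated1 Γ Δ ∧ ∀ φ : Formula, Formula.box φ ∈ Γ → φ ∈ Γ

def Saturated : SeqLevel → Finset Formula → Finset Formula → Prop
  | .one => Saturated1
  | .two => Saturated2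

/-- The Hilbert system GL. -/
inductive GLHilbert : Formula → Prop
  | ax1 (φ ψ : Formula) : GLHilbert (φ.imp (ψ.imp φ))
  | ax2 (φ ψ χ : Formula) :
      GLHilbert ((φ.imp (ψ.imp χ)).imp ((φ.imp ψ).imp (φ.imp χ)))
  | ax3 (φ : Formula) : GLHilbert (((φ.imp .bot).imp .bot).imp φ)
  | axK (φ ψ : Formula) :
      GLHilbert ((Formula.box (φ.imp ψ)).imp ((Formula.box φ).imp (Formula.box ψ)))
  | axLob (φ : Formula) :
      GLHilbert ((Formula.box ((Formula.box φ).imp φ)).imp (Formula.box φ))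
  | mp {φ ψ} : GLHilbert (φ.imp ψ) → GLHilbert φ → GLHilbert ψ
  | nec {φ} : GLHilbert φ → GLHilbert (Formula.box φ)

/-- The Hilbert system GLS: theorems of GL and all □α → α, closed under modus ponens. -/
inductive GLSHilbert : Formula → Prop
  | gl {φ} : GLHilbert φ → GLSHilbert φ
  | refl (α : Formula) : GLSHilbert ((Formula.box α).imp α)
  | mp {φ ψ} : GLSHilbert (φ.imp ψ) → GLSHilbert φ → GLSHilbert ψ

/-- Conjunction (encoded with → and ⊥) of a list of formulas; empty conjunction is ⊤. -/
def Formula.conj : List Formula → Formula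
  | [] => Formula.bot.imp Formula.bot
  | φ :: l => ((φ.imp ((Formula.conj l).imp .bot)).imp .bot)

/-- Membership predicate for the canonical model: saturated first-level sequents over S
that are not cut-free provable in GLS_seq. -/
def W0pred (S : Finset Formula) (s : Finset Formula × Finset Formula) : Prop :=
  Saturated1 s.1 s.2 ∧ ¬ GLSSeq false SeqLevel.one s.1 s.2 ∧ s.1 ∪ s.2 ⊆ S

/-- Worlds of the canonical model. -/
def W0 (S : Finset Formula) : Type := {s : Finset Formula × Finset Formula // W0pred S s}

/-- Accessibility of the canonical model: (Γ⇒Δ) R₀ (Γ'⇒Δ') iff Γ_□ ⊊ Γ'_□ and Γ_□ ⊆ Γ'. -/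
def R0 (S : Finset Formula) (s t : W0 S) : Prop :=
  boxInv s.1.1 ⊂ boxInv t.1.1 ∧ boxInv s.1.1 ⊆ t.1.1

/-- Valuation of the canonical model: p is true at (Γ⇒Δ) iff p ∈ Γ. -/
def V0 (S : Finset Formula) (s : W0 S) (p : ℕ) : Prop := Formula.var p ∈ s.1.1

/-- The extended set of worlds W = W₀ ∪ ℕ. -/
def Wext (S : Finset Formula) : Type := W0 S ⊕ ℕ

/-- The extended accessibility relation, with distinguished world `wp` in W₀. -/
def Rext (S : Finset Formula) (wp : W0 S) : Wext S → Wext S → Prop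
  | Sum.inl x, Sum.inl y => R0 S x y
  | Sum.inr _, Sum.inl y => y = wp ∨ R0 S wp y
  | Sum.inr n, Sum.inr m => m < n
  | Sum.inl _, Sum.inr _ => False

/-- The extended valuation: worlds in ℕ behave like the distinguished world `wp`. -/
def Vext (S : Finset Formula) (wp : W0 S) : Wext S → ℕ → Prop
  | Sum.inl x, p => V0 S x p
  | Sum.inr _, p => V0 S wp p
section Aux

lemma mem_subf_self (φ : Formula) : φ ∈ φ.subf := by
  cases φ <;> simp [Formula.subf]

lemma subf_trans : ∀ (β α : Formula), α ∈ β.subf → α.subf ⊆ β.subf := by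
  intro β
  induction β with
  | var p =>
    intro α hα
    simp [Formula.subf] at hα; subst hα; exact subset_rfl
  | bot =>
    intro α hα
    simp [Formula.subf] at hα; subst hα; exact subset_rfl
  | imp φ ψ ihφ ihψ =>
    intro α hα
    simp only [Formula.subf, Finset.mem_insert, Finset.mem_union] at hα
    rcases hα with rfl | h | h
    · exact subset_rfl
    · exact (ihφ α h).trans ((Finset.subset_union_left).trans (Finset.subset_insert _ _))
    · exact (ihψ α h).trans ((Finset.subset_union_right).trans (Finset.subset_insert _ _))
  | box φ ihφ =>
    intro α hα
    simp only [Formula.subf, Finset.mem_insert] at hα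
    rcases hα with rfl | h
    · exact subset_rfl
    · exact (ihφ α h).trans (Finset.subset_insert _ _)

lemma SF_closed (Ψ Φ : Finset Formula) : ∀ α ∈ SF Ψ Φ, α.subf ⊆ SF Ψ Φ := by
  intro α hα β hβ
  simp only [SF, Finset.mem_biUnion] at hα ⊢
  obtain ⟨χ, hχ, hαχ⟩ := hα
  exact ⟨χ, hχ, subf_trans χ α hαχ hβ⟩

lemma mem_boxInv {ψ : Formula} {Θ : Finset Formula} :
    ψ ∈ boxInv Θ ↔ Formula.box ψ ∈ Θ := by
  constructor
  · intro h
    simp only [boxInv, Finset.mem_image, Finset.mem_filter] at h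
    obtain ⟨χ, ⟨hχ, hb⟩, hu⟩ := h
    cases χ with
    | box χ' => simp [Formula.unbox] at hu; subst hu; exact hχ
    | var p => simp [Formula.isBox] at hb
    | bot => simp [Formula.isBox] at hb
    | imp _ _ => simp [Formula.isBox] at hb
  · intro h
    simp only [boxInv, Finset.mem_image, Finset.mem_filter]
    exact ⟨Formula.box ψ, ⟨h, rfl⟩, rfl⟩

lemma prov_of_mem_mem {c lv} {Γ Δ : Finset Formula} {φ : Formula}
    (h1 : φ ∈ Γ) (h2 : φ ∈ Δ) : GLSSeq c lv Γ Δ :=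
  GLSSeq.weak (Finset.singleton_subset_iff.mpr h1) (Finset.singleton_subset_iff.mpr h2)
    (GLSSeq.init c lv φ)

lemma prov_of_bot {c lv} {Γ Δ : Finset Formula} (h : Formula.bot ∈ Γ) : GLSSeq c lv Γ Δ :=
  GLSSeq.weak (Finset.singleton_subset_iff.mpr h) (Finset.empty_subset _)
    (GLSSeq.initBot c lv)

lemma glsseq_nonempty : ∀ {c lv} {Γ Δ : Finset Formula}, GLSSeq c lv Γ Δ → c = false →
    (Γ ∪ Δ).Nonempty := by
  intro c lv Γ Δ h
  induction h with
  | init c lv φ => exact fun _ => ⟨φ, by simp⟩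
  | initBot c lv => exact fun _ => ⟨Formula.bot, by simp⟩
  | cut φ h1 h2 ih1 ih2 => exact fun hc => by simp at hc
  | weak hΓ hΔ h ih =>
    intro hc
    obtain ⟨x, hx⟩ := ih hc
    exact ⟨x, Finset.union_subset_union hΓ hΔ hx⟩
  | impL h1 h2 ih1 ih2 => exact fun _ => ⟨_, Finset.mem_union_left _ (Finset.mem_insert_self _ _)⟩
  | impR h ih => exact fun _ => ⟨_, Finset.mem_union_right _ (Finset.mem_insert_self _ _)⟩
  | boxGL h ih => exact fun _ => ⟨_, Finset.mem_union_right _ (Finset.mem_singleton_self _)⟩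
  | boxL φ h ih => exact fun _ => ⟨_, Finset.mem_union_left _ (Finset.mem_insert_self _ _)⟩
  | lift h ih => exact ih

lemma card_sdiff_insert_lt {S Δ : Finset Formula} {φ : Formula} (hφ : φ ∈ S) (h : φ ∉ Δ) :
    (S \ insert φ Δ).card < (S \ Δ).card := by
  apply Finset.card_lt_card
  constructor
  · exact Finset.sdiff_subset_sdiff subset_rfl (Finset.subset_insert _ _)
  · intro hc
    have : φ ∈ S \ insert φ Δ := hc (Finset.mem_sdiff.mpr ⟨hφ, h⟩)
    simp at this

lemma card_sdiff_insert_le (S Δ : Finset Formula) (φ : Formula) :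
    (S \ insert φ Δ).card ≤ (S \ Δ).card :=
  Finset.card_le_card (Finset.sdiff_subset_sdiff subset_rfl (Finset.subset_insert _ _))

lemma saturate_step (S : Finset Formula) (hS : ∀ α ∈ S, α.subf ⊆ S)
    (Γ Δ : Finset Formula) (hsub : Γ ∪ Δ ⊆ S) (hnp : ¬ GLSSeq false .one Γ Δ)
    (hns : ¬ Saturated1 Γ Δ) :
    ∃ Γ₁ Δ₁, Γ ⊆ Γ₁ ∧ Δ ⊆ Δ₁ ∧ Γ₁ ∪ Δ₁ ⊆ S ∧ ¬ GLSSeq false .one Γ₁ Δ₁ ∧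
      (S \ Γ₁).card + (S \ Δ₁).card < (S \ Γ).card + (S \ Δ).card := by
  have hΓS : Γ ⊆ S := (Finset.subset_union_left).trans hsub
  have hΔS : Δ ⊆ S := (Finset.subset_union_right).trans hsub
  rw [Saturated1, not_and_or] at hns
  rcases hns with hns | hns
  · push_neg at hns
    obtain ⟨φ, ψ, hmem, hφΔ, hψΓ⟩ := hns
    have himpS : Formula.imp φ ψ ∈ S := hΓS hmem
    have hφS : φ ∈ S := hS _ himpS (by
      simp only [Formula.subf, Finset.mem_insert, Finset.mem_union]
      exact Or.inr (Or.inl (mem_subf_self φ)))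
    have hψS : ψ ∈ S := hS _ himpS (by
      simp only [Formula.subf, Finset.mem_insert, Finset.mem_union]
      exact Or.inr (Or.inr (mem_subf_self ψ)))
    by_cases hp : GLSSeq false .one Γ (insert φ Δ)
    · refine ⟨insert ψ Γ, Δ, Finset.subset_insert _ _, subset_rfl, ?_, ?_, ?_⟩
      · exact Finset.union_subset (Finset.insert_subset hψS hΓS) hΔS
      · intro hq
        have := GLSSeq.impL hp hq
        rw [Finset.insert_eq_self.mpr hmem] at this
        exact hnp this
      · have := card_sdiff_insert_lt hψS hψΓ
        omega
    · refine ⟨Γ, insert φ Δ, subset_rfl, Finset.subset_insert _ _, ?_, hp, ?_⟩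
      · exact Finset.union_subset hΓS (Finset.insert_subset hφS hΔS)
      · have := card_sdiff_insert_lt hφS hφΔ
        omega
  · push_neg at hns
    obtain ⟨φ, ψ, hmem, hor⟩ := hns
    have himpS : Formula.imp φ ψ ∈ S := hΔS hmem
    have hφS : φ ∈ S := hS _ himpS (by
      simp only [Formula.subf, Finset.mem_insert, Finset.mem_union]
      exact Or.inr (Or.inl (mem_subf_self φ)))
    have hψS : ψ ∈ S := hS _ himpS (by
      simp only [Formula.subf, Finset.mem_insert, Finset.mem_union]
      exact Or.inr (Or.inr (mem_subf_self ψ)))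
    refine ⟨insert φ Γ, insert ψ Δ, Finset.subset_insert _ _, Finset.subset_insert _ _, ?_, ?_, ?_⟩
    · exact Finset.union_subset (Finset.insert_subset hφS hΓS)
        (Finset.insert_subset hψS hΔS)
    · intro hq
      have := GLSSeq.impR hq
      rw [Finset.insert_eq_self.mpr hmem] at this
      exact hnp this
    · have h1 := card_sdiff_insert_le S Γ φ
      have h2 := card_sdiff_insert_le S Δ ψ
      rcases not_and_or.mp (fun hc => hor hc.1 hc.2) with h | h
      · have := card_sdiff_insert_lt hφS h; omega
      · have := card_sdiff_insert_lt hψS h; omega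

lemma saturate (S : Finset Formula) (hS : ∀ α ∈ S, α.subf ⊆ S) :
    ∀ (n : ℕ) (Γ Δ : Finset Formula), (S \ Γ).card + (S \ Δ).card ≤ n →
      Γ ∪ Δ ⊆ S → ¬ GLSSeq false .one Γ Δ →
      ∃ Γ' Δ', Γ ⊆ Γ' ∧ Δ ⊆ Δ' ∧ W0pred S (Γ', Δ') := by
  intro n
  induction n with
  | zero =>
    intro Γ Δ hm hsub hnp
    by_cases hsat : Saturated1 Γ Δ
    · exact ⟨Γ, Δ, subset_rfl, subset_rfl, hsat, hnp, hsub⟩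
    · obtain ⟨Γ₁, Δ₁, _, _, _, _, hlt⟩ := saturate_step S hS Γ Δ hsub hnp hsat
      omega
  | succ n ih =>
    intro Γ Δ hm hsub hnp
    by_cases hsat : Saturated1 Γ Δ
    · exact ⟨Γ, Δ, subset_rfl, subset_rfl, hsat, hnp, hsub⟩
    · obtain ⟨Γ₁, Δ₁, hΓ₁, hΔ₁, hsub₁, hnp₁, hlt⟩ := saturate_step S hS Γ Δ hsub hnp hsat
      obtain ⟨Γ', Δ', hΓ', hΔ', hW⟩ := ih Γ₁ Δ₁ (by omega) hsub₁ hnp₁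
      exact ⟨Γ', Δ', hΓ₁.trans hΓ', hΔ₁.trans hΔ', hW⟩

lemma truth_aux (Ψ Φ : Finset Formula) (φ : Formula) :
    ∀ s : W0 (SF Ψ Φ),
      (φ ∈ s.1.1 → KSat (R0 (SF Ψ Φ)) (V0 (SF Ψ Φ)) φ s) ∧
      (φ ∈ s.1.2 → ¬ KSat (R0 (SF Ψ Φ)) (V0 (SF Ψ Φ)) φ s) := by
  induction φ with
  | var p =>
    intro s
    obtain ⟨hsat, hnp, hsub⟩ := s.2
    constructor
    · exact fun h => h
    · exact fun h hK => hnp (prov_of_mem_mem hK h)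
  | bot =>
    intro s
    obtain ⟨hsat, hnp, hsub⟩ := s.2
    exact ⟨fun h => absurd (prov_of_bot h) hnp, fun _ hK => hK⟩
  | imp φ ψ ihφ ihψ =>
    intro s
    obtain ⟨hsat, hnp, hsub⟩ := s.2
    constructor
    · intro h hφK
      rcases hsat.1 φ ψ h with hd | hg
      · exact absurd hφK ((ihφ s).2 hd)
      · exact (ihψ s).1 hg
    · intro h hK
      obtain ⟨hφΓ, hψΔ⟩ := hsat.2 φ ψ h
      exact (ihψ s).2 hψΔ (hK ((ihφ s).1 hφΓ))
  | box φ ih =>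
    intro s
    obtain ⟨hsat, hnp, hsub⟩ := s.2
    have hΓS : s.1.1 ⊆ SF Ψ Φ := (Finset.subset_union_left).trans hsub
    have hΔS : s.1.2 ⊆ SF Ψ Φ := (Finset.subset_union_right).trans hsub
    constructor
    · intro h t hRt
      exact (ih t).1 (hRt.2 (mem_boxInv.mpr h))
    · intro h hK
      have hSgS : (boxInv s.1.1) ⊆ (SF Ψ Φ) := by
        intro ψ hψ
        have hb : Formula.box ψ ∈ s.1.1 := mem_boxInv.mp hψ
        exact SF_closed Ψ Φ _ (hΓS hb)
          (by simp only [Formula.subf, Finset.mem_insert]; exact Or.inr (mem_subf_self ψ))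
      have hSgboxΓ : (boxInv s.1.1).image Formula.box ⊆ s.1.1 := by
        intro x hx
        obtain ⟨ψ, hψ, rfl⟩ := Finset.mem_image.mp hx
        exact mem_boxInv.mp hψ
      have hφS : φ ∈ (SF Ψ Φ) := SF_closed Ψ Φ _ (hΔS h)
        (by simp only [Formula.subf, Finset.mem_insert]; exact Or.inr (mem_subf_self φ))
      have hΓ₁sub : ((boxInv s.1.1) ∪ (boxInv s.1.1).image Formula.box ∪ {Formula.box φ}) ∪ ({φ} : Finset Formula) ⊆ (SF Ψ Φ) := by
        intro x hx
        simp only [Finset.mem_union, Finset.mem_singleton] at hx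
        rcases hx with ((hx | hx) | rfl) | rfl
        · exact hSgS hx
        · exact hΓS (hSgboxΓ hx)
        · exact hΔS h
        · exact hφS
      have hnp₁ : ¬ GLSSeq false .one ((boxInv s.1.1) ∪ (boxInv s.1.1).image Formula.box ∪ {Formula.box φ}) {φ} := by
        intro hp
        exact hnp (GLSSeq.weak hSgboxΓ (Finset.singleton_subset_iff.mpr h) (GLSSeq.boxGL hp))
      obtain ⟨Γ', Δ', hΓ', hΔ', hW⟩ :=
        saturate (SF Ψ Φ) (SF_closed Ψ Φ) _ _ _ le_rfl hΓ₁sub hnp₁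
      have hboxφΓ' : Formula.box φ ∈ Γ' := hΓ' (by simp)
      have hφΔ' : φ ∈ Δ' := hΔ' (by simp)
      have hSgΓ' : (boxInv s.1.1) ⊆ Γ' := fun x hx => hΓ' (by
        simp only [Finset.mem_union]; exact Or.inl (Or.inl hx))
      have hSgboxΓ' : ∀ x ∈ (boxInv s.1.1), Formula.box x ∈ Γ' := fun x hx => hΓ' (by
        simp only [Finset.mem_union]
        exact Or.inl (Or.inr (Finset.mem_image_of_mem _ hx)))
      have hRt : R0 (SF Ψ Φ) s ⟨(Γ', Δ'), hW⟩ := by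
        constructor
        · constructor
          · intro x hx
            exact mem_boxInv.mpr (hSgboxΓ' x hx)
          · intro hc
            have hφSg : φ ∈ (boxInv s.1.1) := hc (mem_boxInv.mpr hboxφΓ')
            exact hnp (prov_of_mem_mem (mem_boxInv.mp hφSg) h)
        · exact hSgΓ'
      exact (ih ⟨(Γ', Δ'), hW⟩).2 hφΔ' (hK _ hRt)

end Aux

/-- Truth lemma for the canonical model: ⟨W₀, R₀, V₀⟩ is a GL-model (W₀ is nonempty, R₀
is transitive and converse well-founded), and every formula in the antecedent (resp.
succedent) of a world of W₀ is true (resp. false) at that world. -/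
theorem canonical_model_truth_lemma (Ψ Φ : Finset Formula) :
    Nonempty (W0 (SF Ψ Φ)) ∧
    Transitive (R0 (SF Ψ Φ)) ∧
    (∀ f : ℕ → W0 (SF Ψ Φ), ¬ ∀ i, R0 (SF Ψ Φ) (f i) (f (i + 1))) ∧
    ∀ (s : W0 (SF Ψ Φ)) (φ : Formula),
      (φ ∈ s.1.1 → KSat (R0 (SF Ψ Φ)) (V0 (SF Ψ Φ)) φ s) ∧
      (φ ∈ s.1.2 → ¬ KSat (R0 (SF Ψ Φ)) (V0 (SF Ψ Φ)) φ s) := by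
  refine ⟨⟨⟨(∅, ∅), ?_, ?_, ?_⟩⟩, ?_, ?_, fun s φ => truth_aux Ψ Φ φ s⟩
  · exact ⟨fun φ ψ h => absurd h (by simp), fun φ ψ h => absurd h (by simp)⟩
  · intro hp
    simpa using glsseq_nonempty hp rfl
  · simp
  · intro a b c hab hbc
    exact ⟨hab.1.trans hbc.1, hab.1.subset.trans hbc.2⟩
  · intro f hf
    have mono : ∀ i, i ≤ (boxInv (f i).1.1).card := by
      intro i
      induction i with
      | zero => exact Nat.zero_le _
      | succ i ihi =>
        have := Finset.card_lt_card (hf i).1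
        omega
    have hb : (boxInv (f ((SF Ψ Φ).card + 1)).1.1).card ≤ (SF Ψ Φ).card := by
      refine le_trans (le_trans Finset.card_image_le (Finset.card_filter_le _ _)) ?_
      exact Finset.card_le_card fun x hx =>
        (f ((SF Ψ Φ).card + 1)).2.2.2 (Finset.mem_union_left _ hx)
    have := mono ((SF Ψ Φ).card + 1)
    omega
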